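/- Let K be an algebraically closed field of characteristic zero, p ≥ 2 an integer, and ψ₁, ψ₂, γ ∈ K[[s,t]] with γ invertible, ψ₁, ψ₂ not divisible by t, and suppose t^N γ = J₁^p ψ₁^p + J₂^p ψ₂^p for some N > 0 and invertible J₁, J₂ ∈ K[[s,t]]. Then ψ₁ and ψ₂ are invertible or divisible by t; hence, if both ψ₁ and ψ₂ are non-invertible, a contradiction follows. -/

import Mathlib

open MvPowerSeries Finset

namespace Stmt6Aux

variable {K : Type*} [Field K]

/-- The "set `X 1` to zero" ring homomorphism `K[[s,t]] → K[[s]]`. -/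
noncomputable def pi : MvPowerSeries (Fin 2) K →+* PowerSeries K where
  toFun f := PowerSeries.mk fun n => MvPowerSeries.coeff (Finsupp.single 0 n) f
  map_one' := by
    ext n
    simp [MvPowerSeries.coeff_one, PowerSeries.coeff_one, Finsupp.single_eq_zero]
  map_mul' f g := by
    classical
    ext n
    rw [PowerSeries.coeff_mk, MvPowerSeries.coeff_mul, PowerSeries.coeff_mul,
      Finsupp.antidiagonal_single, Finset.sum_map]
    simp
  map_zero' := by ext n; simp
  map_add' f g := by ext n; simp

@[simp] lemma coeff_pi (f : MvPowerSeries (Fin 2) K) (n : ℕ) :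
    PowerSeries.coeff n (pi f) = MvPowerSeries.coeff (Finsupp.single 0 n) f :=
  by simp [pi]

@[simp] lemma pi_C (c : K) :
    pi (MvPowerSeries.C c) = PowerSeries.C c := by
  classical
  ext n
  simp [MvPowerSeries.coeff_C, PowerSeries.coeff_C, Finsupp.single_eq_zero]

lemma X1_dvd_iff (f : MvPowerSeries (Fin 2) K) :
    (MvPowerSeries.X 1 : MvPowerSeries (Fin 2) K) ∣ f ↔ pi f = 0 := by
  rw [MvPowerSeries.X_dvd_iff]
  constructor
  · intro h
    ext n
    rw [coeff_pi, map_zero]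
    exact h _ (by simp [Finsupp.single_apply])
  · intro h m hm
    have hm' : m = Finsupp.single 0 (m 0) := by
      ext i
      fin_cases i
      · simp
      · simpa [Finsupp.single_apply] using hm
    rw [hm']
    have := congrArg (PowerSeries.coeff (m 0)) h
    simpa using this

lemma prime_X1 : Prime (MvPowerSeries.X 1 : MvPowerSeries (Fin 2) K) := by
  constructor
  · intro h
    have := congrArg (MvPowerSeries.coeff (Finsupp.single 1 1)) h
    classical
    simp [MvPowerSeries.coeff_X] at this
  · constructor
    · rw [MvPowerSeries.isUnit_iff_constantCoeff, MvPowerSeries.constantCoeff_X]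
      exact fun h => h.ne_zero rfl
    · intro a b h
      rw [X1_dvd_iff] at h ⊢
      rw [X1_dvd_iff (K := K) b]
      rw [map_mul] at h
      exact mul_eq_zero.mp h

end Stmt6Aux

open Stmt6Aux

/-- If t^N γ = J₁^p ψ₁^p + J₂^p ψ₂^p with γ, J₁, J₂ units, N > 0 and ψ₁, ψ₂ not
divisible by t, then ψ₁ and ψ₂ are invertible or divisible by t. -/
theorem stmt_6 {K : Type*} [Field K] [IsAlgClosed K] [CharZero K]
    (p : ℕ) (hp : 2 ≤ p) (N : ℕ) (hN : 0 < N)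
    (ψ₁ ψ₂ γ J₁ J₂ : MvPowerSeries (Fin 2) K)
    (hγ : IsUnit γ) (hJ₁ : IsUnit J₁) (hJ₂ : IsUnit J₂)
    (h₁ : ¬ (MvPowerSeries.X 1 : MvPowerSeries (Fin 2) K) ∣ ψ₁)
    (h₂ : ¬ (MvPowerSeries.X 1 : MvPowerSeries (Fin 2) K) ∣ ψ₂)
    (heq : (MvPowerSeries.X 1 : MvPowerSeries (Fin 2) K) ^ N * γ =
      J₁ ^ p * ψ₁ ^ p + J₂ ^ p * ψ₂ ^ p) :
    (IsUnit ψ₁ ∨ (MvPowerSeries.X 1 : MvPowerSeries (Fin 2) K) ∣ ψ₁) ∧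
    (IsUnit ψ₂ ∨ (MvPowerSeries.X 1 : MvPowerSeries (Fin 2) K) ∣ ψ₂) ∧
    (¬ IsUnit ψ₁ → ¬ IsUnit ψ₂ → False) := by
  classical
  haveI : IsDomain (MvPowerSeries (Fin 2) K) := NoZeroDivisors.to_isDomain _
  set T : MvPowerSeries (Fin 2) K := MvPowerSeries.X 1 with hT
  have hTprime : Prime T := prime_X1
  have hp0 : p ≠ 0 := by omega
  -- constant coefficient equation
  have hceq : (MvPowerSeries.constantCoeff (σ := Fin 2) (R := K) J₁) ^ p *
        (MvPowerSeries.constantCoeff (σ := Fin 2) (R := K) ψ₁) ^ p +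
      (MvPowerSeries.constantCoeff (σ := Fin 2) (R := K) J₂) ^ p *
        (MvPowerSeries.constantCoeff (σ := Fin 2) (R := K) ψ₂) ^ p = 0 := by
    have := congrArg (MvPowerSeries.constantCoeff (σ := Fin 2) (R := K)) heq
    simpa [hT, map_mul, map_pow, map_add, MvPowerSeries.constantCoeff_X,
      zero_pow hN.ne'] using this.symm
  have hcJ₁ : (MvPowerSeries.constantCoeff (σ := Fin 2) (R := K) J₁) ≠ 0 :=
    (MvPowerSeries.isUnit_iff_constantCoeff.mp hJ₁).ne_zero
  have hcJ₂ : (MvPowerSeries.constantCoeff (σ := Fin 2) (R := K) J₂) ≠ 0 :=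
    (MvPowerSeries.isUnit_iff_constantCoeff.mp hJ₂).ne_zero
  have hiff : (MvPowerSeries.constantCoeff (σ := Fin 2) (R := K) ψ₁) = 0 ↔
      (MvPowerSeries.constantCoeff (σ := Fin 2) (R := K) ψ₂) = 0 := by
    constructor
    · intro h
      rw [h, zero_pow hp0, mul_zero, zero_add, mul_eq_zero] at hceq
      rcases hceq with h' | h'
      · exact absurd (pow_eq_zero_iff hp0 |>.mp h') hcJ₂
      · exact pow_eq_zero_iff hp0 |>.mp h'
    · intro h
      rw [h, zero_pow hp0, mul_zero, add_zero, mul_eq_zero] at hceq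
      rcases hceq with h' | h'
      · exact absurd (pow_eq_zero_iff hp0 |>.mp h') hcJ₁
      · exact pow_eq_zero_iff hp0 |>.mp h'
  -- main claim
  have hmain : ¬ IsUnit ψ₁ → ¬ IsUnit ψ₂ → False := by
    intro hu₁ hu₂
    have hψ₁0 : (MvPowerSeries.constantCoeff (σ := Fin 2) (R := K) ψ₁) = 0 := by
      by_contra h
      exact hu₁ (MvPowerSeries.isUnit_iff_constantCoeff.mpr (isUnit_iff_ne_zero.mpr h))
    have hψ₂0 : (MvPowerSeries.constantCoeff (σ := Fin 2) (R := K) ψ₂) = 0 := by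
      by_contra h
      exact hu₂ (MvPowerSeries.isUnit_iff_constantCoeff.mpr (isUnit_iff_ne_zero.mpr h))
    set a : MvPowerSeries (Fin 2) K := J₁ * ψ₁ with ha
    set b : MvPowerSeries (Fin 2) K := J₂ * ψ₂ with hb
    have hna : ¬ T ∣ a := by
      intro h
      rcases hTprime.dvd_mul.mp h with h' | h'
      · exact hTprime.not_unit (isUnit_of_dvd_unit h' hJ₁)
      · exact h₁ h'
    have hnb : ¬ T ∣ b := by
      intro h
      rcases hTprime.dvd_mul.mp h with h' | h'
      · exact hTprime.not_unit (isUnit_of_dvd_unit h' hJ₂)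
      · exact h₂ h'
    have hA : pi a ≠ 0 := fun h => hna ((X1_dvd_iff a).mpr h)
    have hB : pi b ≠ 0 := fun h => hnb ((X1_dvd_iff b).mpr h)
    have heq' : T ^ N * γ = a ^ p + b ^ p := by rw [heq, ha, hb]; ring
    have hpiT : pi (T : MvPowerSeries (Fin 2) K) = 0 := (X1_dvd_iff T).mp dvd_rfl
    have hAB : (pi a) ^ p + (pi b) ^ p = 0 := by
      have := congrArg pi heq'
      rw [map_mul, map_pow, hpiT, zero_pow hN.ne', zero_mul, map_add, map_pow, map_pow] at this
      exact this.symm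
    -- find scalar c with c^p = -1 and pi a = C c * pi b
    obtain ⟨c, hcp, hcab⟩ : ∃ c : K, c ^ p = -1 ∧
        pi a = PowerSeries.C c * pi b := by
      set F := FractionRing (PowerSeries K)
      set ι : PowerSeries K →+* F := algebraMap (PowerSeries K) F with hι
      have hinj : Function.Injective ι := IsFractionRing.injective (PowerSeries K) F
      set φ : K →+* F := (ι.comp (PowerSeries.C)) with hφ
      set x : F := ι (pi a) / ι (pi b) with hx
      have hιB : ι (pi b) ≠ 0 := fun h => hB (hinj (by simpa using h))
      have hxp : x ^ p + 1 = 0 := by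
        have h0 : ι ((pi a) ^ p + (pi b) ^ p) = 0 := by rw [hAB, map_zero]
        rw [map_add ι, map_pow ι, map_pow ι] at h0
        rw [hx, div_pow, div_add_one (pow_ne_zero p hιB), div_eq_zero_iff]
        exact Or.inl h0
      set Q : Polynomial K := Polynomial.X ^ p + Polynomial.C 1 with hQ
      have hQsplits : Q.Splits := IsAlgClosed.splits Q
      have hQmonic : Q.Monic := Polynomial.monic_X_pow_add_C _ hp0
      have hroot : x ∈ (Q.map φ).roots := by
        rw [Polynomial.mem_roots (hQmonic.map φ).ne_zero]
        simp only [hQ, Polynomial.IsRoot.def, Polynomial.eval_add, Polynomial.eval_pow,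
          Polynomial.eval_X, Polynomial.eval_C, Polynomial.map_add, Polynomial.map_pow,
          Polynomial.map_X, Polynomial.map_C, map_one, Polynomial.map_one, Polynomial.eval_one]
        exact hxp
      rw [hQsplits.roots_map φ, Multiset.mem_map] at hroot
      obtain ⟨c, hcr, hcx⟩ := hroot
      refine ⟨c, ?_, ?_⟩
      · have := Polynomial.isRoot_of_mem_roots hcr
        simp only [hQ, Polynomial.IsRoot.def, Polynomial.eval_add, Polynomial.eval_pow,
          Polynomial.eval_X, Polynomial.eval_C] at this
        linear_combination this
      · apply hinj
        rw [map_mul ι ((PowerSeries.C) c) (pi b)]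
        have : φ c = x := hcx
        rw [hφ] at this
        have hx' : ι (pi a) = (ι.comp (PowerSeries.C)) c * ι (pi b) := by
          rw [this, hx, div_mul_cancel₀ _ hιB]
        rw [RingHom.comp_apply] at hx'
        exact hx'
    -- the twisted second factor
    set b' : MvPowerSeries (Fin 2) K := MvPowerSeries.C c * b with hb'
    have hπb' : pi b' = PowerSeries.C c * pi b := by
      rw [hb', map_mul, pi_C]
    have hπab : pi (a - b') = 0 := by
      rw [map_sub, hπb', hcab, sub_self]
    have hdvd0 : T ∣ (a - b') := (X1_dvd_iff _).mpr hπab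
    have hb'p : b' ^ p = - b ^ p := by
      rw [hb', mul_pow, ← map_pow, hcp, map_neg, map_one, neg_one_mul]
    set S : MvPowerSeries (Fin 2) K :=
      ∑ i ∈ Finset.range p, a ^ i * b' ^ (p - 1 - i) with hS
    have hfac : S * (a - b') = T ^ N * γ := by
      rw [hS, geom_sum₂_mul, hb'p, sub_neg_eq_add, heq']
    -- S is not divisible by T
    have hπS : pi S = (p : PowerSeries K) * (pi a) ^ (p - 1) := by
      rw [hS, map_sum]
      have hterm : ∀ i ∈ Finset.range p,
          pi (a ^ i * b' ^ (p - 1 - i)) = (pi a) ^ (p - 1) := by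
        intro i hi
        rw [Finset.mem_range] at hi
        rw [map_mul, map_pow, map_pow, hπb', ← hcab, ← pow_add]
        congr 1
        omega
      rw [Finset.sum_congr rfl hterm, Finset.sum_const, Finset.card_range, nsmul_eq_mul]
    have hπS0 : pi S ≠ 0 := by
      rw [hπS]
      apply mul_ne_zero
      · intro h
        have h2 := congrArg PowerSeries.constantCoeff h
        simp only [map_natCast, map_zero, Nat.cast_eq_zero] at h2
        exact hp0 h2
      · exact pow_ne_zero _ hA
    have hndvdS : ¬ T ∣ S := fun h => hπS0 ((X1_dvd_iff S).mp h)
    -- extract the power of T and conclude S is a unit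
    have hTN : T ^ N ∣ S * (a - b') := by rw [hfac]; exact dvd_mul_right _ _
    have hTN' : T ^ N ∣ (a - b') := hTprime.pow_dvd_of_dvd_mul_left N hndvdS hTN
    obtain ⟨d, hd⟩ := hTN'
    have hTN0 : (T : MvPowerSeries (Fin 2) K) ^ N ≠ 0 := by
      apply pow_ne_zero
      intro h
      have := congrArg (MvPowerSeries.coeff (Finsupp.single 1 1)) h
      simp [hT, MvPowerSeries.coeff_X] at this
    have hγSd : γ = S * d := by
      apply mul_left_cancel₀ hTN0
      rw [← hfac, hd]
      ring
    have hSunit : IsUnit S := isUnit_of_mul_isUnit_left (hγSd ▸ hγ)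
    -- but constant coefficient of S is zero
    have hca : MvPowerSeries.constantCoeff (σ := Fin 2) (R := K) a = 0 := by
      rw [ha, map_mul, hψ₁0, mul_zero]
    have hcb' : MvPowerSeries.constantCoeff (σ := Fin 2) (R := K) b' = 0 := by
      rw [hb', map_mul, hb, map_mul, hψ₂0, mul_zero, mul_zero]
    have hcS : MvPowerSeries.constantCoeff (σ := Fin 2) (R := K) S = 0 := by
      rw [hS, map_sum]
      apply Finset.sum_eq_zero
      intro i hi
      rw [Finset.mem_range] at hi
      rw [map_mul, map_pow, map_pow]
      rcases Nat.eq_zero_or_pos i with h0 | h0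
      · have : p - 1 - i ≠ 0 := by omega
        rw [hcb', zero_pow this, mul_zero]
      · rw [hca, zero_pow h0.ne', zero_mul]
    rw [MvPowerSeries.isUnit_iff_constantCoeff, hcS] at hSunit
    exact hSunit.ne_zero rfl
  -- conclude
  have hu1 : IsUnit ψ₁ := by
    by_contra hu₁
    apply hmain hu₁
    intro hu₂
    have hψ₁0 : (MvPowerSeries.constantCoeff (σ := Fin 2) (R := K) ψ₁) = 0 := by
      by_contra h
      exact hu₁ (MvPowerSeries.isUnit_iff_constantCoeff.mpr (isUnit_iff_ne_zero.mpr h))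
    have := MvPowerSeries.isUnit_iff_constantCoeff.mp hu₂
    rw [hiff.mp hψ₁0] at this
    exact this.ne_zero rfl
  have hu2 : IsUnit ψ₂ := by
    by_contra hu₂
    apply hmain ?_ hu₂
    intro hu₁
    have hψ₂0 : (MvPowerSeries.constantCoeff (σ := Fin 2) (R := K) ψ₂) = 0 := by
      by_contra h
      exact hu₂ (MvPowerSeries.isUnit_iff_constantCoeff.mpr (isUnit_iff_ne_zero.mpr h))
    have := MvPowerSeries.isUnit_iff_constantCoeff.mp hu₁
    rw [hiff.mpr hψ₂0] at this
    exact this.ne_zero rfl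
  exact ⟨Or.inl hu1, Or.inl hu2, fun h _ => absurd hu1 h⟩
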